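/- Let R be a Noetherian commutative ring, 𝔭 a prime ideal, and suppose that for all integers N > 2h and all rational s ∈ (h/N, 1 - h/N) one has 𝔭^{(N)} ⊆ 𝔭^{(⌈Ns⌉ - h)} · 𝔭^{(⌈N(1-s)⌉ - h)}, where h ≥ 1 is fixed. Then 𝔭^{(2hn)} ⊆ 𝔭^n for all n ≥ 1. -/

import Mathlib

/-- The `N`-th symbolic power of a prime ideal `𝔭`: the contraction of
`𝔭^N R_𝔭` to `R` along the localization map. -/
noncomputable def primeSymbolicPower {R : Type*} [CommRing R] (𝔭 : Ideal R) [𝔭.IsPrime]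
    (n : ℕ) : Ideal R :=
  (Ideal.map (algebraMap R (Localization.AtPrime 𝔭)) (𝔭 ^ n)).comap
    (algebraMap R (Localization.AtPrime 𝔭))

lemma psp_antitone {R : Type*} [CommRing R] (𝔭 : Ideal R) [𝔭.IsPrime] {m n : ℕ}
    (hmn : m ≤ n) : primeSymbolicPower 𝔭 n ≤ primeSymbolicPower 𝔭 m :=
  Ideal.comap_mono (Ideal.map_mono (Ideal.pow_le_pow_right hmn))

lemma psp_one_le {R : Type*} [CommRing R] (𝔭 : Ideal R) [𝔭.IsPrime] :
    primeSymbolicPower 𝔭 1 ≤ 𝔭 := by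
  unfold primeSymbolicPower
  rw [pow_one, Localization.AtPrime.map_eq_maximalIdeal,
    ← Ideal.under_def, Localization.AtPrime.comap_maximalIdeal]

theorem stmt_19 {R : Type*} [CommRing R] [IsNoetherianRing R] (𝔭 : Ideal R) [𝔭.IsPrime]
    (h : ℕ) (hh : 1 ≤ h)
    (hyp : ∀ N : ℕ, 2 * h < N → ∀ s : ℚ, (h : ℚ) / N < s → s < 1 - (h : ℚ) / N →
      primeSymbolicPower 𝔭 N ≤
        primeSymbolicPower 𝔭 ((⌈(N : ℚ) * s⌉ - h).toNat) *
          primeSymbolicPower 𝔭 ((⌈(N : ℚ) * (1 - s)⌉ - h).toNat)) :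
    ∀ n : ℕ, 1 ≤ n → primeSymbolicPower 𝔭 (2 * h * n) ≤ 𝔭 ^ n := by
  intro n
  induction n with
  | zero => omega
  | succ n ih =>
    intro _
    rcases Nat.eq_zero_or_pos n with h1 | h1
    · -- base case n+1 = 1
      subst h1
      refine le_trans (psp_antitone 𝔭 ?_) (le_trans (psp_one_le 𝔭) ?_)
      · omega
      · rw [pow_succ, pow_zero, one_mul]
    · -- n ≥ 1
      have hn1 : 1 ≤ n := by omega
      set N : ℕ := 2 * h * (n + 1) with hN
      have hN4 : 4 * h ≤ N := by
        have : 2 * h * 2 ≤ 2 * h * (n + 1) := by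
          apply Nat.mul_le_mul_left; omega
        omega
      have hNpos : (0 : ℚ) < (N : ℚ) := by
        have : 0 < N := by positivity
        exact_mod_cast this
      set s : ℚ := ((h : ℚ) + 1/2) / N with hs
      have hs1 : (h : ℚ) / N < s := by
        rw [hs, div_lt_div_iff_of_pos_right hNpos]
        linarith
      have hs2 : s < 1 - (h : ℚ) / N := by
        have hcast : (N : ℚ) ≥ 4 * h := by exact_mod_cast hN4
        have hhpos : (1:ℚ) ≤ (h:ℚ) := by exact_mod_cast hh
        have heq : 1 - (h:ℚ)/N = ((N:ℚ) - h)/N := by field_simp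
        rw [hs, heq, div_lt_div_iff_of_pos_right hNpos]
        linarith
      have key := hyp N (by omega) s hs1 hs2
      have hNs : (N : ℚ) * s = (h : ℚ) + 1/2 := by
        rw [hs, mul_div_cancel₀ _ hNpos.ne']
      have hc1 : ⌈(N : ℚ) * s⌉ = (h : ℤ) + 1 := by
        rw [hNs]
        rw [Int.ceil_eq_iff]
        constructor <;> push_cast <;> norm_num
      have hNs2 : (N : ℚ) * (1 - s) = (N : ℚ) - (h : ℚ) - 1/2 := by
        rw [mul_sub, hNs]; ring
      have hc2 : ⌈(N : ℚ) * (1 - s)⌉ = (N : ℤ) - h := by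
        rw [hNs2]
        rw [Int.ceil_eq_iff]
        constructor <;> push_cast <;> linarith
      rw [hc1, hc2] at key
      have e1 : ((h : ℤ) + 1 - h).toNat = 1 := by omega
      have hN' : N = 2 * h * n + 2 * h := by rw [hN]; ring
      set m := 2 * h * n with hm
      have e2 : ((N : ℤ) - h - h).toNat = m := by omega
      rw [e1, e2] at key
      calc primeSymbolicPower 𝔭 N ≤ _ := key
        _ ≤ 𝔭 * 𝔭 ^ n := Ideal.mul_mono (psp_one_le 𝔭) (ih hn1)
        _ = 𝔭 ^ (n + 1) := by ring
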